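/- Let (x_i)_{i≥1} be an i.i.d. sequence of random variables, Θ a compact metric space, and g_n(θ) = n^{-1} ∑_{i=1}^n g(x_i, θ) with ‖g(x_i, θ) − g(x_i, θ')‖ ≤ b(x_i) · d(θ, θ') for an envelope b with finite expectation. If in addition g_n(θ) converges in probability to a deterministic limit ḡ(θ) for each θ ∈ Θ, then the convergence is uniform: sup_{θ∈Θ} ‖g_n(θ) − ḡ(θ)‖ → 0 in probability (a uniform weak law of large numbers). -/

import Mathlib

open MeasureTheory ProbabilityTheory Filter Topology

/-!
STATEMENT 13 (Uniform weak law of large numbers, Lemma `thm:ulln`).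

Let `(x i)` be an i.i.d. sequence, `Θ` a compact metric space, and
`g n θ = n⁻¹ ∑_{i < n} g (x i) θ` with the Lipschitz envelope condition
`‖g ξ θ - g ξ θ'‖ ≤ b ξ · d(θ, θ')`, `E[b (x i)]` finite.  If moreover `g n θ`
converges in probability to a deterministic limit `ḡ θ` for each `θ`, then the
convergence is uniform over `Θ` in probability (formalized via the events
`{∃ θ, ε < ‖g n θ - ḡ θ‖}`).
-/

/-- Convergence in probability. -/
def TendstoInProb {Ω E : Type*} [MeasurableSpace Ω] [PseudoMetricSpace E]
    (P : Measure Ω) (X : ℕ → Ω → E) (c : E) : Prop :=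
  ∀ ε : ℝ, 0 < ε → Tendsto (fun n => P {ω | ε < dist (X n ω) c}) atTop (nhds 0)

theorem uniform_weak_law_of_large_numbers
    {Ω X Θ : Type*} [MeasurableSpace Ω] [MeasurableSpace X]
    [MetricSpace Θ] [CompactSpace Θ] {p : ℕ}
    (P : Measure Ω) [IsProbabilityMeasure P]
    (x : ℕ → Ω → X) (hmeas : ∀ i, Measurable (x i))
    (hindep : iIndepFun x P)
    (ν : Measure X) (hident : ∀ i, P.map (x i) = ν)
    (g : X → Θ → EuclideanSpace ℝ (Fin p))
    (b : X → ℝ) (hb0 : ∀ ξ, 0 ≤ b ξ) (hbmeas : Measurable b)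
    (hLip : ∀ ξ : X, ∀ θ θ' : Θ, ‖g ξ θ - g ξ θ'‖ ≤ b ξ * dist θ θ')
    (μ : ℝ) (hint : ∀ i, Integrable (fun ω => b (x i ω)) P)
    (hμ : ∀ i, ∫ ω, b (x i ω) ∂P = μ)
    (gbar : Θ → EuclideanSpace ℝ (Fin p))
    (hpt : ∀ θ : Θ, TendstoInProb P
      (fun n ω => (n : ℝ)⁻¹ • ∑ i ∈ Finset.range n, g (x i ω) θ) (gbar θ)) :
    ∀ ε : ℝ, 0 < ε →
      Tendsto (fun n : ℕ =>
        P {ω | ∃ θ : Θ,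
          ε < ‖((n : ℝ)⁻¹ • ∑ i ∈ Finset.range n, g (x i ω) θ) - gbar θ‖})
        atTop (nhds 0) := by
  -- notation
  set G : ℕ → Θ → Ω → EuclideanSpace ℝ (Fin p) :=
    fun n θ ω => (n : ℝ)⁻¹ • ∑ i ∈ Finset.range n, g (x i ω) θ with hG
  set B : ℕ → Ω → ℝ := fun n ω => (n : ℝ)⁻¹ * ∑ i ∈ Finset.range n, b (x i ω) with hB
  have hμ0 : 0 ≤ μ := by
    rw [← hμ 0]; exact integral_nonneg fun ω => hb0 _
  have hB0 : ∀ n ω, 0 ≤ B n ω := by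
    intro n ω
    apply mul_nonneg (by positivity)
    exact Finset.sum_nonneg fun i _ => hb0 _
  -- empirical Lipschitz bound
  have hchain : ∀ (n : ℕ) (ω : Ω) (θ θ' : Θ),
      ‖G n θ ω - G n θ' ω‖ ≤ B n ω * dist θ θ' := by
    intro n ω θ θ'
    have h1 : G n θ ω - G n θ' ω
        = (n : ℝ)⁻¹ • ∑ i ∈ Finset.range n, (g (x i ω) θ - g (x i ω) θ') := by
      simp [hG, ← smul_sub, Finset.sum_sub_distrib]
    rw [h1, norm_smul, Real.norm_eq_abs, abs_of_nonneg (by positivity : (0:ℝ) ≤ (n:ℝ)⁻¹)]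
    calc (n : ℝ)⁻¹ * ‖∑ i ∈ Finset.range n, (g (x i ω) θ - g (x i ω) θ')‖
        ≤ (n : ℝ)⁻¹ * ∑ i ∈ Finset.range n, b (x i ω) * dist θ θ' := by
          apply mul_le_mul_of_nonneg_left _ (by positivity)
          exact (norm_sum_le _ _).trans (Finset.sum_le_sum fun i _ => hLip _ _ _)
      _ = B n ω * dist θ θ' := by rw [hB, ← Finset.sum_mul, mul_assoc]
  -- weak law for the envelope averages
  have hBlaw : ∀ δ : ℝ, 0 < δ →
      Tendsto (fun n => P {ω | δ ≤ |B n ω - μ|}) atTop (nhds 0) := by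
    have hae : ∀ᵐ ω ∂P, Tendsto (fun n => B n ω) atTop (nhds μ) := by
      have := strong_law_ae_real (fun i ω => b (x i ω)) (hint 0)
        (fun i j hij => (hindep.indepFun hij).comp hbmeas hbmeas)
        (fun i => IdentDistrib.comp
          ⟨(hmeas i).aemeasurable, (hmeas 0).aemeasurable, by rw [hident i, hident 0]⟩ hbmeas)
      filter_upwards [this] with ω hω
      have : (∫ ω, b (x 0 ω) ∂P) = μ := hμ 0
      rw [this] at hω
      convert hω using 2 with n
      rw [hB]; ring
    have hmB : ∀ n, AEStronglyMeasurable (B n) P := by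
      intro n
      exact (measurable_const.mul
        (Finset.measurable_sum _ fun i _ => hbmeas.comp (hmeas i))).aestronglyMeasurable
    have := tendstoInMeasure_of_tendsto_ae hmB hae
    intro δ hδ
    have h := tendstoInMeasure_iff_dist.1 this δ hδ
    simpa [Real.dist_eq] using h
  -- the limit gbar is Lipschitz with constant μ
  have hgbarLip : ∀ θ θ' : Θ, ‖gbar θ - gbar θ'‖ ≤ μ * dist θ θ' := by
    intro θ θ'
    by_contra hcon
    push_neg at hcon
    rcases eq_or_ne θ θ' with rfl | hne
    · simp at hcon
    have hd : 0 < dist θ θ' := dist_pos.2 hne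
    set c : ℝ := ‖gbar θ - gbar θ'‖ - μ * dist θ θ' with hc
    have hcpos : 0 < c := by rw [hc]; linarith
    have h1 := hpt θ (c / 4) (by positivity)
    have h2 := hpt θ' (c / 4) (by positivity)
    have h3 := hBlaw (c / (4 * dist θ θ')) (by positivity)
    have hsum : Tendsto (fun n =>
        P {ω | c / 4 < dist (G n θ ω) (gbar θ)}
        + P {ω | c / 4 < dist (G n θ' ω) (gbar θ')}
        + P {ω | c / (4 * dist θ θ') ≤ |B n ω - μ|}) atTop (nhds 0) := by
      simpa using (h1.add h2).add h3
    have hev : ∀ᶠ n in atTop,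
        P {ω | c / 4 < dist (G n θ ω) (gbar θ)}
        + P {ω | c / 4 < dist (G n θ' ω) (gbar θ')}
        + P {ω | c / (4 * dist θ θ') ≤ |B n ω - μ|} < 1 :=
      hsum.eventually_lt_const (by norm_num)
    rcases hev.exists with ⟨n, hn⟩
    have hne' : ({ω | c / 4 < dist (G n θ ω) (gbar θ)}
        ∪ {ω | c / 4 < dist (G n θ' ω) (gbar θ')}
        ∪ {ω | c / (4 * dist θ θ') ≤ |B n ω - μ|}) ≠ Set.univ := by
      intro heq
      have : (1 : ENNReal) ≤ _ := le_of_eq (by rw [← measure_univ (μ := P), ← heq])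
      have hle : P ({ω | c / 4 < dist (G n θ ω) (gbar θ)}
          ∪ {ω | c / 4 < dist (G n θ' ω) (gbar θ')}
          ∪ {ω | c / (4 * dist θ θ') ≤ |B n ω - μ|})
          ≤ P {ω | c / 4 < dist (G n θ ω) (gbar θ)}
          + P {ω | c / 4 < dist (G n θ' ω) (gbar θ')}
          + P {ω | c / (4 * dist θ θ') ≤ |B n ω - μ|} :=
        (measure_union_le _ _).trans (by gcongr; exact measure_union_le _ _)
      exact absurd (this.trans hle) (not_le.2 hn)
    rcases Set.ne_univ_iff_exists_notMem _ |>.1 hne' with ⟨ω, hω⟩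
    simp only [Set.mem_union, Set.mem_setOf_eq, not_or, not_lt, not_le] at hω
    obtain ⟨⟨hω1, hω2⟩, hω3⟩ := hω
    have hBle : B n ω ≤ μ + c / (4 * dist θ θ') := by
      have := abs_lt.1 hω3
      linarith [this.2]
    have : ‖gbar θ - gbar θ'‖ ≤ c / 4 + B n ω * dist θ θ' + c / 4 := by
      have t1 : ‖gbar θ - gbar θ'‖ ≤ dist (gbar θ) (G n θ ω)
          + ‖G n θ ω - G n θ' ω‖ + dist (G n θ' ω) (gbar θ') := by
        have := dist_triangle4 (gbar θ) (G n θ ω) (G n θ' ω) (gbar θ')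
        simpa [dist_eq_norm] using this
      have t2 := hchain n ω θ θ'
      rw [dist_comm] at hω1
      linarith
    have hBd : B n ω * dist θ θ' ≤ μ * dist θ θ' + c / 4 := by
      have : B n ω * dist θ θ' ≤ (μ + c / (4 * dist θ θ')) * dist θ θ' :=
        mul_le_mul_of_nonneg_right hBle hd.le
      have heq : (μ + c / (4 * dist θ θ')) * dist θ θ' = μ * dist θ θ' + c / 4 := by
        field_simp
      linarith [heq ▸ this]
    have : ‖gbar θ - gbar θ'‖ ≤ μ * dist θ θ' + 3 * c / 4 := by linarith
    rw [hc] at this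
    linarith [hcpos, this]
  -- main argument
  intro ε hε
  set δ : ℝ := ε / (2 * (2 * μ + 1)) with hδdef
  have hδpos : 0 < δ := by positivity
  -- finite δ-net by compactness
  obtain ⟨T, hT⟩ := IsCompact.elim_finite_subcover (isCompact_univ (X := Θ))
    (fun θ : Θ => Metric.ball θ δ) (fun θ => Metric.isOpen_ball)
    (fun θ _ => Set.mem_iUnion.2 ⟨θ, Metric.mem_ball_self hδpos⟩)
  -- the key inclusion
  have hincl : ∀ n : ℕ,
      {ω | ∃ θ : Θ, ε < ‖G n θ ω - gbar θ‖}
      ⊆ {ω | (1:ℝ) ≤ |B n ω - μ|} ∪ ⋃ k ∈ T, {ω | ε / 2 < dist (G n k ω) (gbar k)} := by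
    intro n ω hω
    obtain ⟨θ, hθ⟩ := hω
    by_contra hcon
    simp only [Set.mem_union, Set.mem_iUnion, Set.mem_setOf_eq, not_or, not_le, not_lt,
      not_exists] at hcon
    obtain ⟨hB1, hk⟩ := hcon
    have hBle : B n ω ≤ μ + 1 := by
      have := abs_lt.1 hB1
      linarith [this.2]
    obtain ⟨k, hkT, hθk⟩ : ∃ k ∈ T, θ ∈ Metric.ball k δ := by
      have := hT (Set.mem_univ θ)
      simpa using this
    have hdk : dist θ k < δ := Metric.mem_ball.1 hθk
    have t1 : ‖G n θ ω - gbar θ‖ ≤ ‖G n θ ω - G n k ω‖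
        + ‖G n k ω - gbar k‖ + ‖gbar k - gbar θ‖ := by
      have := dist_triangle4 (G n θ ω) (G n k ω) (gbar k) (gbar θ)
      simpa [dist_eq_norm] using this
    have t2 : ‖G n θ ω - G n k ω‖ ≤ (μ + 1) * δ := by
      calc ‖G n θ ω - G n k ω‖ ≤ B n ω * dist θ k := hchain n ω θ k
        _ ≤ (μ + 1) * δ := by
            apply mul_le_mul hBle hdk.le dist_nonneg (by linarith)
    have t3 : ‖G n k ω - gbar k‖ ≤ ε / 2 := by
      have := hk k hkT
      rwa [dist_eq_norm] at this
    have t4 : ‖gbar k - gbar θ‖ ≤ μ * δ := by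
      calc ‖gbar k - gbar θ‖ ≤ μ * dist k θ := hgbarLip k θ
        _ ≤ μ * δ := by
            apply mul_le_mul_of_nonneg_left _ hμ0
            rw [dist_comm]; exact hdk.le
    have hδeq : (μ + 1) * δ + μ * δ = ε / 2 := by
      rw [hδdef]; field_simp; ring
    have : ‖G n θ ω - gbar θ‖ ≤ ε := by linarith
    exact absurd hθ (not_lt.2 this)
  -- squeeze
  have hupper : Tendsto (fun n =>
      P {ω | (1:ℝ) ≤ |B n ω - μ|}
      + ∑ k ∈ T, P {ω | ε / 2 < dist (G n k ω) (gbar k)}) atTop (nhds 0) := by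
    have h1 := hBlaw 1 one_pos
    have h2 : Tendsto (fun n => ∑ k ∈ T, P {ω | ε / 2 < dist (G n k ω) (gbar k)})
        atTop (nhds 0) := by
      have := tendsto_finset_sum T (fun k _ => hpt k (ε / 2) (by positivity))
      simpa using this
    simpa using h1.add h2
  apply tendsto_of_tendsto_of_tendsto_of_le_of_le tendsto_const_nhds hupper
    (fun n => zero_le)
  intro n
  calc P {ω | ∃ θ : Θ, ε < ‖G n θ ω - gbar θ‖}
      ≤ P ({ω | (1:ℝ) ≤ |B n ω - μ|} ∪ ⋃ k ∈ T, {ω | ε / 2 < dist (G n k ω) (gbar k)}) :=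
        measure_mono (hincl n)
    _ ≤ P {ω | (1:ℝ) ≤ |B n ω - μ|} + P (⋃ k ∈ T, {ω | ε / 2 < dist (G n k ω) (gbar k)}) :=
        measure_union_le _ _
    _ ≤ P {ω | (1:ℝ) ≤ |B n ω - μ|} + ∑ k ∈ T, P {ω | ε / 2 < dist (G n k ω) (gbar k)} := by
        gcongr
        exact measure_biUnion_finset_le _ _
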